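/- Let L \ge 1 and \gamma \in \mathbb{R} with |\gamma| = L - 1/L. Then the logarithmic spiral map g(z) = z e^{i\gamma\log|z|} (with g(0)=0) is L-bilipschitz on \mathbb{C}: for all z, w \in \mathbb{C}, L^{-1}|z-w| \le |g(z)-g(w)| \le L|z-w|. -/

import Mathlib

open Complex

/-- The logarithmic spiral map. -/
noncomputable def spiralF (γ : ℝ) (z : ℂ) : ℂ :=
  z * Complex.exp (Complex.I * γ * Real.log (‖z‖))

lemma spiral_key (L γ a b : ℝ) (hL : 1 ≤ L) (hγ : |γ| = L - 1 / L) :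
    a ^ 2 + (b + γ * a) ^ 2 ≤ L ^ 2 * (a ^ 2 + b ^ 2) := by
  have hL0 : (0:ℝ) < L := lt_of_lt_of_le one_pos hL
  have hm : (0:ℝ) ≤ 1 - (1/L)^2 := by
    have h1 : 1/L ≤ 1 := by rw [div_le_one hL0]; exact hL
    have h2 : 0 < 1/L := one_div_pos.2 hL0
    nlinarith
  rcases abs_cases γ with ⟨h, _⟩ | ⟨h, _⟩
  · have hγ' : γ = L - 1/L := by rw [← h, hγ]
    have e : L ^ 2 * (a ^ 2 + b ^ 2) - (a ^ 2 + (b + γ * a) ^ 2)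
        = (1 - (1/L)^2) * (a - L * b) ^ 2 := by
      rw [hγ']; field_simp; ring
    nlinarith [mul_nonneg hm (sq_nonneg (a - L * b))]
  · have hγ' : γ = -(L - 1/L) := by linarith
    have e : L ^ 2 * (a ^ 2 + b ^ 2) - (a ^ 2 + (b + γ * a) ^ 2)
        = (1 - (1/L)^2) * (a + L * b) ^ 2 := by
      rw [hγ']; field_simp; ring
    nlinarith [mul_nonneg hm (sq_nonneg (a + L * b))]

lemma spiral_bound (L γ : ℝ) (hL : 1 ≤ L) (hγ : |γ| = L - 1 / L) (z v : ℂ) (hz : z ≠ 0) :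
    ‖v + (γ : ℂ) * (((Complex.normSq z)⁻¹ : ℝ) *
        ((((starRingEnd ℂ) z * v).re : ℝ) : ℂ)) * Complex.I * z‖
      ≤ L * ‖v‖ := by
  have hL0 : (0:ℝ) < L := lt_of_lt_of_le one_pos hL
  set u := v / z with hu
  have hv : v = z * u := by rw [hu]; exact (mul_div_cancel₀ v hz).symm
  have hns : Complex.normSq z ≠ 0 := (Complex.normSq_pos.2 hz).ne'
  have ht : (Complex.normSq z)⁻¹ * ((starRingEnd ℂ) z * v).re = u.re := by
    rw [hv]
    have h2 : (starRingEnd ℂ) z * (z * u) = (Complex.normSq z : ℂ) * u := by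
      rw [← mul_assoc, mul_comm ((starRingEnd ℂ) z) z, Complex.mul_conj]
    rw [h2, Complex.re_ofReal_mul]
    field_simp
  have ht' : ((((Complex.normSq z)⁻¹ : ℝ) : ℂ) * ((((starRingEnd ℂ) z * v).re : ℝ) : ℂ))
      = ((u.re : ℝ) : ℂ) := by rw [← Complex.ofReal_mul, ht]
  rw [ht']
  have factor : v + (γ : ℂ) * (u.re : ℂ) * Complex.I * z
      = z * (u + (γ : ℂ) * ((u.re : ℂ) * Complex.I)) := by rw [hv]; ring
  rw [factor, norm_mul]
  rw [mul_comm L, hv, norm_mul, mul_assoc]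
  refine mul_le_mul_of_nonneg_left ?_ (norm_nonneg z)
  have hsq : (‖u + (γ : ℂ) * ((u.re : ℂ) * Complex.I)‖)^2
      = u.re^2 + (u.im + γ * u.re)^2 := by
    rw [Complex.sq_norm, Complex.normSq_apply]
    simp
    ring
  have hsq2 : (‖u‖ * L)^2 = L^2 * (u.re^2 + u.im^2) := by
    rw [mul_pow, Complex.sq_norm, Complex.normSq_apply]; ring
  have key := spiral_key L γ u.re u.im hL hγ
  nlinarith [norm_nonneg (u + (γ : ℂ) * ((u.re : ℂ) * Complex.I)),
    mul_nonneg (norm_nonneg u) hL0.le]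

lemma log_abs_hasFDerivAt (z : ℂ) (hz : z ≠ 0) :
    HasFDerivAt (fun w : ℂ => Real.log (‖w‖))
      ((Complex.normSq z)⁻¹ • (innerSL ℝ z)) z := by
  have hz' : ‖z‖ ^ 2 ≠ 0 := pow_ne_zero 2 (norm_ne_zero_iff.2 hz)
  have h2 : HasFDerivAt (fun w : ℂ => ‖w‖ ^ 2) (2 • (innerSL ℝ z)) z :=
    (hasStrictFDerivAt_norm_sq z).hasFDerivAt
  have h3 : HasFDerivAt (fun w : ℂ => Real.log (‖w‖ ^ 2))
      ((‖z‖ ^ 2)⁻¹ • (2 • (innerSL ℝ z))) z := h2.log hz'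
  have heq : (fun w : ℂ => Real.log (‖w‖ ^ 2)) =ᶠ[nhds z]
      (fun w : ℂ => 2 * Real.log (‖w‖)) := by
    filter_upwards [isOpen_compl_singleton.mem_nhds (by simpa using hz)] with w hw
    rw [Real.log_pow]
    norm_num
  have h4 := h3.congr_of_eventuallyEq heq.symm
  have h5 := h4.const_smul (1/2 : ℝ)
  have e1 : (fun w : ℂ => Real.log ‖w‖) = (1/2 : ℝ) • (fun w : ℂ => 2 * Real.log ‖w‖) := by
    funext w; simp only [Pi.smul_apply, smul_eq_mul]; ring
  rw [e1]
  refine h5.congr_fderiv ?_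
  ext v
  simp [Complex.normSq_eq_norm_sq]
  ring

lemma spiral_deriv (L γ : ℝ) (hL : 1 ≤ L) (hγ : |γ| = L - 1 / L)
    (z : ℂ) (hz : z ≠ 0) :
    ∃ D : ℂ →L[ℝ] ℂ, HasFDerivAt (spiralF γ) D z ∧ ‖D‖ ≤ L := by
  have hL0 : (0:ℝ) < L := lt_of_lt_of_le one_pos hL
  set ℓ : ℂ →L[ℝ] ℝ := (Complex.normSq z)⁻¹ • (innerSL ℝ z)
  have h1 : HasFDerivAt (fun w : ℂ => Real.log (‖w‖)) ℓ z :=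
    log_abs_hasFDerivAt z hz
  have h2 : HasFDerivAt (fun w : ℂ => ((Real.log (‖w‖) : ℝ) : ℂ))
      (Complex.ofRealCLM.comp ℓ) z := Complex.ofRealCLM.hasFDerivAt.comp z h1
  have h3 : HasFDerivAt (fun w : ℂ => Complex.I * γ * Real.log (‖w‖))
      ((Complex.I * γ) • (Complex.ofRealCLM.comp ℓ)) z := h2.const_mul _
  have h4 := h3.cexp
  have h5 := (hasFDerivAt_id z).mul' h4
  simp only [id_eq] at h5
  refine ⟨_, h5, ?_⟩
  apply ContinuousLinearMap.opNorm_le_bound _ hL0.le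
  intro v
  set E := Complex.exp (Complex.I * γ * Real.log (‖z‖)) with hE
  have hEabs : ‖E‖ = 1 := by
    rw [hE, Complex.norm_exp]
    simp
  have hval : (z • (E • ((Complex.I * γ) • (Complex.ofRealCLM.comp ℓ))) +
      MulOpposite.op E • ContinuousLinearMap.id ℝ ℂ) v
      = E * (v + (γ * ((Complex.normSq z)⁻¹ * ((starRingEnd ℂ) z * v).re)) * Complex.I * z) := by
    simp [ℓ, Complex.inner, Complex.real_smul, smul_eq_mul]
    ring
  rw [hval]
  rw [norm_mul, hEabs, one_mul]
  exact spiral_bound L γ hL hγ z v hz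

lemma spiral_abs (γ : ℝ) (z : ℂ) : ‖spiralF γ z‖ = ‖z‖ := by
  rw [spiralF, norm_mul, Complex.norm_exp]
  simp

lemma spiral_lip (L γ : ℝ) (hL : 1 ≤ L) (hγ : |γ| = L - 1 / L) :
    ∀ z w : ℂ, ‖spiralF γ z - spiralF γ w‖ ≤ L * ‖z - w‖ := by
  have hL0 : (0:ℝ) < L := lt_of_lt_of_le one_pos hL
  intro z w
  have triv : ∀ a b : ℂ, ‖a - b‖ ≤ ‖a‖ + ‖b‖ := by
    intro a b
    simpa [sub_eq_add_neg] using norm_add_le a (-b)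
  have h00 : spiralF γ 0 = 0 := by simp [spiralF]
  by_cases hz : z = 0
  · subst hz
    rw [h00, zero_sub, norm_neg, spiral_abs, zero_sub, norm_neg]
    exact le_mul_of_one_le_left (norm_nonneg w) hL
  by_cases hw : w = 0
  · subst hw
    rw [h00, sub_zero, spiral_abs, sub_zero]
    exact le_mul_of_one_le_left (norm_nonneg z) hL
  by_cases h0 : (0:ℂ) ∈ segment ℝ z w
  · have hd := dist_add_dist_of_mem_segment h0
    have h1 : ‖spiralF γ z - spiralF γ w‖
        ≤ ‖z‖ + ‖w‖ := by
      calc ‖spiralF γ z - spiralF γ w‖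
          ≤ ‖spiralF γ z‖ + ‖spiralF γ w‖ := triv _ _
        _ = ‖z‖ + ‖w‖ := by rw [spiral_abs, spiral_abs]
    have h2 : ‖z‖ + ‖w‖ = ‖z - w‖ := by
      have := hd
      simp only [Complex.dist_eq, sub_zero, zero_sub, norm_neg] at this
      linarith
    calc ‖spiralF γ z - spiralF γ w‖
        ≤ ‖z - w‖ := by rw [← h2]; exact h1
      _ ≤ L * ‖z - w‖ :=
          le_mul_of_one_le_left (norm_nonneg _) hL
  · set s : Set ℂ := segment ℝ z w with hs
    have hsne : ∀ x ∈ s, x ≠ 0 := by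
      intro x hx he
      exact h0 (he ▸ hx)
    classical
    set f' : ℂ → ℂ →L[ℝ] ℂ := fun x =>
      if hx : x = 0 then 0 else (spiral_deriv L γ hL hγ x hx).choose with hf'
    have hd : ∀ x ∈ s, HasFDerivWithinAt (spiralF γ) (f' x) s x := by
      intro x hx
      have hx0 : x ≠ 0 := hsne x hx
      have : f' x = (spiral_deriv L γ hL hγ x hx0).choose := by
        rw [hf']; simp [hx0]
      rw [this]
      exact ((spiral_deriv L γ hL hγ x hx0).choose_spec.1).hasFDerivWithinAt
    have hb : ∀ x ∈ s, ‖f' x‖ ≤ L := by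
      intro x hx
      have hx0 : x ≠ 0 := hsne x hx
      have : f' x = (spiral_deriv L γ hL hγ x hx0).choose := by
        rw [hf']; simp [hx0]
      rw [this]
      exact (spiral_deriv L γ hL hγ x hx0).choose_spec.2
    have := (convex_segment z w).norm_image_sub_le_of_norm_hasFDerivWithin_le hd hb
      (right_mem_segment ℝ z w) (left_mem_segment ℝ z w)
    simpa using this

/-- If `L ≥ 1` and `|γ| = L - 1/L`, the logarithmic spiral map `g(z) = z e^{iγ log|z|}`
(with `g 0 = 0`) is `L`-bilipschitz on `ℂ`. -/
theorem log_spiral_bilipschitz (L γ : ℝ) (hL : 1 ≤ L) (hγ : |γ| = L - 1 / L)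
    (g : ℂ → ℂ)
    (hg : ∀ z : ℂ, z ≠ 0 →
      g z = z * Complex.exp (Complex.I * γ * Real.log (‖z‖)))
    (hg0 : g 0 = 0) :
    ∀ z w : ℂ,
      L⁻¹ * ‖z - w‖ ≤ ‖g z - g w‖ ∧
      ‖g z - g w‖ ≤ L * ‖z - w‖ := by
  have hL0 : (0:ℝ) < L := lt_of_lt_of_le one_pos hL
  have hgF : ∀ x : ℂ, g x = spiralF γ x := by
    intro x
    by_cases hx : x = 0
    · subst hx; simp [hg0, spiralF]
    · rw [hg x hx, spiralF]
  have hinv : ∀ x : ℂ, spiralF (-γ) (spiralF γ x) = x := by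
    intro x
    by_cases hx : x = 0
    · subst hx; simp [spiralF]
    · have habs := spiral_abs γ x
      have e1 : spiralF (-γ) (spiralF γ x)
          = spiralF γ x * Complex.exp (Complex.I * ((-γ : ℝ) : ℂ) *
            Real.log (‖spiralF γ x‖)) := rfl
      rw [e1, habs]
      simp only [spiralF]
      rw [mul_assoc, ← Complex.exp_add]
      have e2 : Complex.I * (γ : ℂ) * (Real.log (‖x‖) : ℂ)
          + Complex.I * ((-γ : ℝ) : ℂ) * (Real.log (‖x‖) : ℂ) = 0 := by
        push_cast; ring
      rw [e2, Complex.exp_zero, mul_one]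
  intro z w
  constructor
  · have h2 := spiral_lip L (-γ) hL (by rwa [abs_neg]) (spiralF γ z) (spiralF γ w)
    rw [hinv, hinv] at h2
    rw [hgF z, hgF w, inv_mul_eq_div, div_le_iff₀ hL0]
    linarith
  · rw [hgF z, hgF w]
    exact spiral_lip L γ hL hγ z w
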